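/- Let v, h : ℝ³ → ℝ³ be C² vector fields with div v = 0 and div h = 0, and set ω := curl v, j := curl h. Then curl((v·∇)h − (h·∇)v) = (v·∇)j − (h·∇)ω − (j·∇)v + (ω·∇)h + 2·Σ_{l=1}^{3} ∇v^l × ∇h^l, where v^l, h^l are the Cartesian components of v, h. -/

import Mathlib

/-- The `i`-th partial derivative of a scalar function on `ℝ³`. -/
noncomputable def pd (i : Fin 3) (f : (Fin 3 → ℝ) → ℝ) (x : Fin 3 → ℝ) : ℝ :=
  fderiv ℝ f x (Pi.single i 1)

/-- The gradient of a scalar function on `ℝ³`. -/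
noncomputable def grad3 (f : (Fin 3 → ℝ) → ℝ) (x : Fin 3 → ℝ) : Fin 3 → ℝ :=
  fun i => pd i f x

/-- The divergence of a vector field on `ℝ³`. -/
noncomputable def div3 (u : (Fin 3 → ℝ) → (Fin 3 → ℝ)) (x : Fin 3 → ℝ) : ℝ :=
  ∑ i, pd i (fun y => u y i) x

/-- The curl of a vector field on `ℝ³`. -/
noncomputable def curl3 (u : (Fin 3 → ℝ) → (Fin 3 → ℝ)) (x : Fin 3 → ℝ) : Fin 3 → ℝ :=
  ![pd 1 (fun y => u y 2) x - pd 2 (fun y => u y 1) x,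
    pd 2 (fun y => u y 0) x - pd 0 (fun y => u y 2) x,
    pd 0 (fun y => u y 1) x - pd 1 (fun y => u y 0) x]

/-- The advective derivative `(v·∇)u` of a vector field `u` along `v`. -/
noncomputable def advect (v u : (Fin 3 → ℝ) → (Fin 3 → ℝ)) (x : Fin 3 → ℝ) : Fin 3 → ℝ :=
  fun i => ∑ j, v x j * pd j (fun y => u y i) x

/-- The term `tr(∇v × ∇h) = Σ_l ∇v^l × ∇h^l`. -/
noncomputable def mhdF (v h : (Fin 3 → ℝ) → (Fin 3 → ℝ)) (x : Fin 3 → ℝ) : Fin 3 → ℝ :=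
  ∑ l, crossProduct (grad3 (fun y => v y l) x) (grad3 (fun y => h y l) x)

lemma comp_contDiff {n : ℕ} {u : (Fin 3 → ℝ) → (Fin 3 → ℝ)} (hu : ContDiff ℝ n u) (i : Fin 3) :
    ContDiff ℝ n (fun y => u y i) :=
  (ContinuousLinearMap.proj (R := ℝ) (φ := fun _ : Fin 3 => ℝ) i).contDiff.comp hu

lemma pd_contDiff {f : (Fin 3 → ℝ) → ℝ} (hf : ContDiff ℝ 2 f) (i : Fin 3) :
    ContDiff ℝ 1 (fun y => pd i f y) := by
  have h1 : ContDiff ℝ 1 (fderiv ℝ f) := hf.fderiv_right (by norm_num)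
  exact h1.clm_apply contDiff_const

lemma pd_sub {f g : (Fin 3 → ℝ) → ℝ} {x : Fin 3 → ℝ} (hf : DifferentiableAt ℝ f x)
    (hg : DifferentiableAt ℝ g x) (i : Fin 3) :
    pd i (fun y => f y - g y) x = pd i f x - pd i g x := by
  unfold pd; rw [fderiv_fun_sub hf hg]; rfl

lemma pd_mul {f g : (Fin 3 → ℝ) → ℝ} {x : Fin 3 → ℝ} (hf : DifferentiableAt ℝ f x)
    (hg : DifferentiableAt ℝ g x) (i : Fin 3) :
    pd i (fun y => f y * g y) x = pd i f x * g x + f x * pd i g x := by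
  unfold pd; rw [fderiv_fun_mul hf hg]; simp; ring

lemma pd_sum {F : Fin 3 → (Fin 3 → ℝ) → ℝ} {x : Fin 3 → ℝ}
    (hF : ∀ j, DifferentiableAt ℝ (F j) x) (i : Fin 3) :
    pd i (fun y => ∑ j, F j y) x = ∑ j, pd i (F j) x := by
  unfold pd; rw [fderiv_fun_sum (fun j _ => hF j)]; simp

lemma pd_pd_symm {f : (Fin 3 → ℝ) → ℝ} (hf : ContDiff ℝ 2 f) (i j : Fin 3) (x : Fin 3 → ℝ) :
    pd i (fun y => pd j f y) x = pd j (fun y => pd i f y) x := by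
  have h1 : ContDiff ℝ 1 (fderiv ℝ f) := hf.fderiv_right (by norm_num)
  have hd : DifferentiableAt ℝ (fderiv ℝ f) x := (h1.differentiable one_ne_zero) x
  have key : ∀ a b : Fin 3, fderiv ℝ (fun y => fderiv ℝ f y (Pi.single a 1)) x (Pi.single b 1)
      = fderiv ℝ (fderiv ℝ f) x (Pi.single b 1) (Pi.single a 1) := by
    intro a b
    rw [fderiv_clm_apply hd (differentiableAt_const _)]
    simp
  show fderiv ℝ (fun y => pd j f y) x (Pi.single i 1) = _
  unfold pd
  rw [key, key]
  exact second_derivative_symmetric (fun y => ((hf.differentiable (by norm_num)) y).hasFDerivAt)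
    hd.hasFDerivAt _ _

lemma pd_advect {v u : (Fin 3 → ℝ) → (Fin 3 → ℝ)} (hv : ContDiff ℝ 2 v) (hu : ContDiff ℝ 2 u)
    (a i : Fin 3) (x : Fin 3 → ℝ) :
    pd a (fun y => advect v u y i) x =
      ∑ j, (pd a (fun y => v y j) x * pd j (fun y => u y i) x
        + v x j * pd a (fun y => pd j (fun z => u z i) y) x) := by
  have h1 : ∀ j : Fin 3, DifferentiableAt ℝ (fun y => v y j) x := fun j =>
    ((comp_contDiff hv j).differentiable (by norm_num)) x
  have h2 : ∀ j : Fin 3, DifferentiableAt ℝ (fun y => pd j (fun z => u z i) y) x := fun j =>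
    ((pd_contDiff (comp_contDiff hu i) j).differentiable one_ne_zero) x
  have : (fun y => advect v u y i) = fun y => ∑ j, v y j * pd j (fun z => u z i) y := rfl
  rw [this, pd_sum (fun j => (h1 j).fun_mul (h2 j))]
  exact Finset.sum_congr rfl fun j _ => pd_mul (h1 j) (h2 j) a

/-- Curl identity underlying the current evolution equation in ideal MHD. -/
theorem stmt9 (v h : (Fin 3 → ℝ) → (Fin 3 → ℝ))
    (hv : ContDiff ℝ 2 v) (hh : ContDiff ℝ 2 h)
    (hdivv : ∀ x, div3 v x = 0) (hdivh : ∀ x, div3 h x = 0) :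
    ∀ x, curl3 (fun y => advect v h y - advect h v y) x =
      advect v (curl3 h) x - advect h (curl3 v) x
        - advect (curl3 h) v x + advect (curl3 v) h x + (2 : ℝ) • mhdF v h x := by
  intro x
  have hvc : ∀ i : Fin 3, ContDiff ℝ 2 (fun y => v y i) := comp_contDiff hv
  have hhc : ∀ i : Fin 3, ContDiff ℝ 2 (fun y => h y i) := comp_contDiff hh
  have hvp : ∀ (i j : Fin 3) (y : Fin 3 → ℝ),
      DifferentiableAt ℝ (fun z => pd j (fun w => v w i) z) y := fun i j y =>
    ((pd_contDiff (hvc i) j).differentiable one_ne_zero) y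
  have hhp : ∀ (i j : Fin 3) (y : Fin 3 → ℝ),
      DifferentiableAt ℝ (fun z => pd j (fun w => h w i) z) y := fun i j y =>
    ((pd_contDiff (hhc i) j).differentiable one_ne_zero) y
  have hadvvh : ∀ i : Fin 3, DifferentiableAt ℝ (fun y => advect v h y i) x := fun i =>
    DifferentiableAt.fun_sum fun j _ =>
      (((hvc j).differentiable (by norm_num)) x).mul (hhp i j x)
  have hadvhv : ∀ i : Fin 3, DifferentiableAt ℝ (fun y => advect h v y i) x := fun i =>
    DifferentiableAt.fun_sum fun j _ =>
      (((hhc j).differentiable (by norm_num)) x).mul (hvp i j x)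
  have L : ∀ a i : Fin 3, pd a (fun y => advect v h y i - advect h v y i) x
      = pd a (fun y => advect v h y i) x - pd a (fun y => advect h v y i) x :=
    fun a i => pd_sub (hadvvh i) (hadvhv i) a
  have Sv : ∀ (a b c i j : Fin 3),
      pd a (fun y => pd b (fun z => v z i) y - pd c (fun z => v z j) y) x
        = pd a (fun y => pd b (fun z => v z i) y) x
          - pd a (fun y => pd c (fun z => v z j) y) x :=
    fun a b c i j => pd_sub (hvp i b x) (hvp j c x) a
  have Sh : ∀ (a b c i j : Fin 3),
      pd a (fun y => pd b (fun z => h z i) y - pd c (fun z => h z j) y) x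
        = pd a (fun y => pd b (fun z => h z i) y) x
          - pd a (fun y => pd c (fun z => h z j) y) x :=
    fun a b c i j => pd_sub (hhp i b x) (hhp j c x) a
  have C10v : ∀ i : Fin 3, pd 1 (fun y => pd 0 (fun z => v z i) y) x
      = pd 0 (fun y => pd 1 (fun z => v z i) y) x := fun i => pd_pd_symm (hvc i) 1 0 x
  have C20v : ∀ i : Fin 3, pd 2 (fun y => pd 0 (fun z => v z i) y) x
      = pd 0 (fun y => pd 2 (fun z => v z i) y) x := fun i => pd_pd_symm (hvc i) 2 0 x
  have C21v : ∀ i : Fin 3, pd 2 (fun y => pd 1 (fun z => v z i) y) x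
      = pd 1 (fun y => pd 2 (fun z => v z i) y) x := fun i => pd_pd_symm (hvc i) 2 1 x
  have C10h : ∀ i : Fin 3, pd 1 (fun y => pd 0 (fun z => h z i) y) x
      = pd 0 (fun y => pd 1 (fun z => h z i) y) x := fun i => pd_pd_symm (hhc i) 1 0 x
  have C20h : ∀ i : Fin 3, pd 2 (fun y => pd 0 (fun z => h z i) y) x
      = pd 0 (fun y => pd 2 (fun z => h z i) y) x := fun i => pd_pd_symm (hhc i) 2 0 x
  have C21h : ∀ i : Fin 3, pd 2 (fun y => pd 1 (fun z => h z i) y) x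
      = pd 1 (fun y => pd 2 (fun z => h z i) y) x := fun i => pd_pd_symm (hhc i) 2 1 x
  have hv22 : pd 2 (fun y => v y 2) x
      = -(pd 0 (fun y => v y 0) x + pd 1 (fun y => v y 1) x) := by
    have := hdivv x; simp [div3, Fin.sum_univ_three] at this; linarith
  have hh22 : pd 2 (fun y => h y 2) x
      = -(pd 0 (fun y => h y 0) x + pd 1 (fun y => h y 1) x) := by
    have := hdivh x; simp [div3, Fin.sum_univ_three] at this; linarith
  funext k
  fin_cases k <;>
  · simp only [Fin.zero_eta, Fin.mk_one, Fin.reduceFinMk]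
    simp only [curl3, Matrix.cons_val_zero, Matrix.cons_val_one, Matrix.head_cons,
      Matrix.cons_val_two, Matrix.tail_cons, Pi.sub_apply, Pi.add_apply, Pi.smul_apply,
      smul_eq_mul, Fin.isValue, mhdF, Finset.sum_apply, grad3, cross_apply]
    simp only [L, pd_advect hv hh, pd_advect hh hv]
    simp only [advect, curl3, Matrix.cons_val_zero, Matrix.cons_val_one, Matrix.head_cons,
      Matrix.cons_val_two, Matrix.tail_cons, Fin.isValue]
    simp only [Sv, Sh, Fin.sum_univ_three]
    simp only [Matrix.cons_val_zero, Matrix.cons_val_one, Matrix.head_cons,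
      Matrix.cons_val_two, Matrix.tail_cons, Fin.isValue]
    simp only [C10v, C20v, C21v, C10h, C20h, C21h]
    rw [hv22, hh22]
    ring
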